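/- Let N ≥ 3 and 3 ≤ k ≤ N. Let P be an N×(N-1) complex matrix, let Q be an N×(N-k+1) complex matrix obtained from P by removing k-2 of its columns, and let a_1, ..., a_k be column vectors in ℂ^N. Then ∑_{i=1}^{k} (−1)^{i−1} det(P, a_i) · det(Q, a_1, ..., a_{i−1}, a_{i+1}, ..., a_k) = 0. -/

import Mathlib

open Matrix

/-- The N×N matrix obtained from an N×r matrix `P` by adjoining the
`N - r` column vectors `v` as the last columns. -/
noncomputable def adjoinCols {N r : ℕ} (P : Matrix (Fin N) (Fin r) ℂ)
    (v : Fin (N - r) → Fin N → ℂ) : Matrix (Fin N) (Fin N) ℂ :=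
  Matrix.of fun i j =>
    if hj : (j : ℕ) < r then P i ⟨j, hj⟩
    else v ⟨(j : ℕ) - r, by have := j.isLt; omega⟩ i

/-- The map `x ↦ det (P, x)` is given by a linear form. -/
lemma adjoin_linear {N : ℕ} (hN : 1 ≤ N) (P : Matrix (Fin N) (Fin (N - 1)) ℂ) :
    ∃ c : Fin N → ℂ, ∀ x : Fin N → ℂ,
      (adjoinCols P (fun _ => x)).det = ∑ i : Fin N, c i * x i := by
  obtain ⟨n, rfl⟩ : ∃ n, N = n + 1 := ⟨N - 1, by omega⟩
  refine ⟨fun i => (-1 : ℂ) ^ ((i : ℕ) + n) *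
      ((adjoinCols P (fun _ => (0 : Fin (n+1) → ℂ))).submatrix i.succAbove
        (Fin.last n).succAbove).det, fun x => ?_⟩
  rw [det_succ_column (adjoinCols P (fun _ => x)) (Fin.last n)]
  refine Finset.sum_congr rfl fun i _ => ?_
  have h1 : (adjoinCols P (fun _ => x)) i (Fin.last n) = x i := by
    simp [adjoinCols]
  have h2 : (adjoinCols P (fun _ => x)).submatrix i.succAbove (Fin.last n).succAbove
      = (adjoinCols P (fun _ => (0 : Fin (n+1) → ℂ))).submatrix i.succAbove
        (Fin.last n).succAbove := by
    ext r j
    simp only [submatrix_apply, adjoinCols, of_apply, Fin.succAbove_last]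
    have hj : ((Fin.castSucc j : Fin (n+1)) : ℕ) < n + 1 - 1 := by
      simp
    rw [dif_pos hj, dif_pos hj]
  rw [h1, h2, Fin.val_last]
  ring

/-- `det (P, q) = 0` when `q` is a column of `P`. -/
lemma adjoin_col_eq_zero {N : ℕ} (hN : 1 ≤ N) (P : Matrix (Fin N) (Fin (N - 1)) ℂ)
    (t : Fin (N - 1)) :
    (adjoinCols P (fun _ => fun i => P i t)).det = 0 := by
  obtain ⟨n, rfl⟩ : ∃ n, N = n + 1 := ⟨N - 1, by omega⟩
  refine det_zero_of_column_eq (i := Fin.castSucc (n := n) t) (j := Fin.last n) ?_ fun r => ?_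
  · intro h
    have := congrArg Fin.val h
    simp at this
    omega
  · simp only [adjoinCols, of_apply]
    have h1 : ((Fin.castSucc (n := n) t : Fin (n+1)) : ℕ) < n + 1 - 1 := by simp
    rw [dif_pos h1, dif_neg (by simp)]
    exact congrArg (P r) (Fin.ext (by simp))

/-- The generalized Plücker relation (Proposition 2.2): `Q` is obtained from `P`
by removing `k - 2` columns (encoded by a strictly monotone column selection `ι`). -/
theorem stmt2 (N k : ℕ) (hk : 3 ≤ k) (hkN : k ≤ N)
    (P : Matrix (Fin N) (Fin (N - 1)) ℂ)
    (ι : Fin (N - k + 1) → Fin (N - 1)) (hι : StrictMono ι)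
    (a : Fin k → Fin N → ℂ) :
    ∑ i : Fin k,
      (-1 : ℂ) ^ (i : ℕ) *
        ((adjoinCols P (fun _ => a i)).det *
          (adjoinCols (Matrix.of fun r j => P r (ι j))
            (fun t => a ⟨if (t : ℕ) < (i : ℕ) then (t : ℕ) else (t : ℕ) + 1,
              by have := t.isLt; split_ifs <;> omega⟩)).det) = 0 := by
  obtain ⟨n, rfl⟩ : ∃ n, N = n + 1 := ⟨N - 1, by omega⟩
  have hkn : k ≤ n + 1 := hkN
  have hm : (n + 1 - k + 1) + k = n + 2 := by omega
  obtain ⟨c, hc⟩ := adjoin_linear (by omega) P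
  -- the N+1 vectors: columns of Q followed by a_1, ..., a_k
  set v : Fin (n + 2) → Fin (n + 1) → ℂ := fun p i =>
    if h : (p : ℕ) < n + 1 - k + 1 then P i (ι ⟨p, h⟩)
    else a ⟨(p : ℕ) - (n + 1 - k + 1), by have := p.isLt; omega⟩ i with hv
  -- the auxiliary (N+1)×(N+1) matrix
  set A : Matrix (Fin (n + 2)) (Fin (n + 2)) ℂ := Matrix.of fun i p =>
    if h : (i : ℕ) < n + 1 then v p ⟨i, h⟩ else (adjoinCols P (fun _ => v p)).det
    with hA
  have hAlast : ∀ p, A (Fin.last (n + 1)) p = (adjoinCols P (fun _ => v p)).det := by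
    intro p
    simp [hA]
  have hAcast : ∀ (r : Fin (n + 1)) p, A (Fin.castSucc r) p = v p r := by
    intro r p
    simp [hA]
    intro h; exact absurd h (by have := r.isLt; omega)
  -- Step 1: det A = 0 since the last row is a combination of the others
  have hA0 : A.det = 0 := by
    have hrow : A (Fin.last (n + 1)) = ∑ r : Fin (n + 2),
        (if h : (r : ℕ) < n + 1 then c ⟨r, h⟩ else 0) • A r := by
      funext p
      rw [Finset.sum_apply, Fin.sum_univ_castSucc]
      simp only [Pi.smul_apply, smul_eq_mul]
      rw [dif_neg (by simp), zero_mul, add_zero, hAlast, hc]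
      refine Finset.sum_congr rfl fun r _ => ?_
      rw [hAcast]
      congr 1
      rw [dif_pos (by simp [r.isLt])]
      exact congrArg c (Fin.ext (by simp))
    have : A.det = (A.updateRow (Fin.last (n + 1)) (∑ r : Fin (n + 2),
        (if h : (r : ℕ) < n + 1 then c ⟨r, h⟩ else 0) • A r)).det := by
      rw [← hrow, updateRow_eq_self]
    rw [this, det_updateRow_sum]
    rw [dif_neg (by simp)]
    simp
  -- Step 2: Laplace expansion of det A along the last row
  rw [det_succ_row A (Fin.last (n + 1))] at hA0
  -- reindex the sum over Fin (n+2) as a sum over Fin (m+k)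
  have hre := Fintype.sum_equiv (finCongr hm)
    (fun q : Fin (n + 1 - k + 1 + k) =>
      (-1 : ℂ) ^ ((Fin.last (n + 1) : ℕ) + ((finCongr hm q : Fin (n + 2)) : ℕ)) *
      A (Fin.last (n + 1)) (finCongr hm q) *
      (A.submatrix (Fin.last (n + 1)).succAbove (finCongr hm q).succAbove).det)
    (fun p : Fin (n + 2) => (-1 : ℂ) ^ ((Fin.last (n + 1) : ℕ) + (p : ℕ)) *
      A (Fin.last (n + 1)) p *
      (A.submatrix (Fin.last (n + 1)).succAbove p.succAbove).det)
    (fun q => rfl)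
  rw [← hre, Fin.sum_univ_add] at hA0
  -- the first block of the sum vanishes: columns of Q are columns of P
  have hblock1 : ∀ j : Fin (n + 1 - k + 1),
      (-1 : ℂ) ^ ((Fin.last (n + 1) : ℕ) +
          ((finCongr hm (Fin.castAdd k j) : Fin (n + 2)) : ℕ)) *
        A (Fin.last (n + 1)) (finCongr hm (Fin.castAdd k j)) *
        (A.submatrix (Fin.last (n + 1)).succAbove
          (finCongr hm (Fin.castAdd k j)).succAbove).det = 0 := by
    intro j
    have hp : ((finCongr hm (Fin.castAdd k j) : Fin (n + 2)) : ℕ) < n + 1 - k + 1 := j.isLt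
    have h1 : A (Fin.last (n + 1)) (finCongr hm (Fin.castAdd k j)) = 0 := by
      rw [hAlast]
      have h2 : (fun (_ : Fin (n + 1 - (n + 1 - 1))) => v (finCongr hm (Fin.castAdd k j)))
          = fun _ => fun r => P r (ι ⟨((finCongr hm (Fin.castAdd k j) : Fin (n + 2)) : ℕ), hp⟩) :=
        funext fun _ => funext fun r => dif_pos hp
      rw [h2]
      exact adjoin_col_eq_zero (by omega) P _
    rw [h1, mul_zero, zero_mul]
  rw [Finset.sum_congr rfl (fun j _ => hblock1 j), Finset.sum_const_zero, zero_add] at hA0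
  -- identify each remaining term with the corresponding term of the goal
  have key : ∀ i : Fin k,
      (-1 : ℂ) ^ (i : ℕ) *
        ((adjoinCols P (fun _ => a i)).det *
          (adjoinCols (Matrix.of fun r j => P r (ι j))
            (fun t => a ⟨if (t : ℕ) < (i : ℕ) then (t : ℕ) else (t : ℕ) + 1,
              by have := t.isLt; split_ifs <;> omega⟩)).det)
      = (-1 : ℂ) ^ (n + 1 + (n + 1 - k + 1)) *
        ((-1 : ℂ) ^ ((Fin.last (n + 1) : ℕ) +
            ((finCongr hm (Fin.natAdd (n + 1 - k + 1) i) : Fin (n + 2)) : ℕ)) *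
          A (Fin.last (n + 1)) (finCongr hm (Fin.natAdd (n + 1 - k + 1) i)) *
          (A.submatrix (Fin.last (n + 1)).succAbove
            (finCongr hm (Fin.natAdd (n + 1 - k + 1) i)).succAbove).det) := by
    intro i
    set p : Fin (n + 2) := finCongr hm (Fin.natAdd (n + 1 - k + 1) i) with hp
    have hpval : (p : ℕ) = (n + 1 - k + 1) + (i : ℕ) := rfl
    -- first factor
    have hD1 : A (Fin.last (n + 1)) p = (adjoinCols P (fun _ => a i)).det := by
      rw [hAlast]
      have hva : v p = a i := by
        funext r
        rw [hv]
        simp only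
        rw [dif_neg (by omega)]
        exact congrFun (congrArg a (Fin.ext (by simp [hpval]))) r
      rw [show (fun (_ : Fin (n + 1 - (n + 1 - 1))) => v p) = fun _ => a i from
        funext fun _ => hva]
    -- second factor
    have hD2 : A.submatrix (Fin.last (n + 1)).succAbove p.succAbove
        = adjoinCols (Matrix.of fun r j => P r (ι j))
            (fun t => a ⟨if (t : ℕ) < (i : ℕ) then (t : ℕ) else (t : ℕ) + 1,
              by have := t.isLt; split_ifs <;> omega⟩) := by
      ext r j
      rw [submatrix_apply, Fin.succAbove_last, hAcast]
      by_cases h1 : (j : ℕ) < (p : ℕ)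
      · rw [Fin.succAbove_of_castSucc_lt p j (by rw [Fin.lt_def]; exact h1)]
        by_cases h2 : (j : ℕ) < n + 1 - k + 1
        · rw [hv]
          simp only [adjoinCols, of_apply]
          rw [dif_pos (show ((Fin.castSucc j : Fin (n + 2)) : ℕ) < n + 1 - k + 1 from h2),
            dif_pos (show (j : ℕ) < n + 1 - k + 1 from h2)]
          exact congrArg (P r) (congrArg ι (Fin.ext (by simp)))
        · rw [hv]
          simp only [adjoinCols, of_apply]
          rw [dif_neg (show ¬ ((Fin.castSucc j : Fin (n + 2)) : ℕ) < n + 1 - k + 1 from h2),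
            dif_neg (show ¬ (j : ℕ) < n + 1 - k + 1 from h2)]
          have hlt : (j : ℕ) - (n + 1 - k + 1) < (i : ℕ) := by
            rw [hpval] at h1; omega
          refine congrFun (congrArg a (Fin.ext ?_)) r
          simp only [Fin.coe_castSucc]
          rw [if_pos hlt]
      · rw [Fin.succAbove_of_le_castSucc p j (by rw [Fin.le_def]; exact not_lt.mp h1)]
        have h2 : ¬ ((Fin.succ j : Fin (n + 2)) : ℕ) < n + 1 - k + 1 := by
          simp only [Fin.val_succ]
          rw [hpval] at h1; omega
        rw [hv]
        simp only [adjoinCols, of_apply]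
        rw [dif_neg h2, dif_neg (show ¬ (j : ℕ) < n + 1 - k + 1 by rw [hpval] at h1; omega)]
        have hge : ¬ ((j : ℕ) - (n + 1 - k + 1) < (i : ℕ)) := by
          rw [hpval] at h1; omega
        refine congrFun (congrArg a (Fin.ext ?_)) r
        simp only [Fin.val_succ]
        rw [if_neg hge]
        omega
    rw [hD1, hD2]
    have hlv : ((Fin.last (n + 1) : Fin (n + 2)) : ℕ) = n + 1 := rfl
    have hsign : (-1 : ℂ) ^ (i : ℕ) = (-1 : ℂ) ^ (n + 1 + (n + 1 - k + 1)) *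
        (-1 : ℂ) ^ (((Fin.last (n + 1) : Fin (n + 2)) : ℕ) + (p : ℕ)) := by
      rw [← pow_add]
      have he : n + 1 + (n + 1 - k + 1) + (((Fin.last (n + 1) : Fin (n + 2)) : ℕ) + (p : ℕ))
          = 2 * (n + 1 + (n + 1 - k + 1)) + (i : ℕ) := by
        rw [hlv, hpval]; ring
      rw [he, pow_add, pow_mul]
      norm_num
    rw [hsign]
    ring
  rw [Finset.sum_congr rfl (fun i _ => key i), ← Finset.mul_sum, hA0, mul_zero]
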